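/- arXiv:1905.11675 — 2 statements merged into one kernel-verified Lean document; each statement's English description precedes it below -/
import Mathlib

section
/- For any W₁, W₂ ∈ ℝ^{M×d}, any a ∈ {−1,1}^M, and data points x_1, …, x_n ∈ ℝ^d with ‖x_i‖₂ ≤ C_x, the stacked Jacobian matrices satisfy ‖𝐉_{W₁} − 𝐉_{W₂}‖₂ ≤ ‖𝐉_{W₁} − 𝐉_{W₂}‖_F ≤ β C_x² √(n/M) ‖W₁ − W₂‖_F. -/
open Matrix

/-- Frobenius norm of a real matrix. -/
noncomputable def frobNorm {m n : Type*} [Fintype m] [Fintype n] (A : Matrix m n ℝ) : ℝ :=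
  Real.sqrt (∑ i, ∑ j, A i j ^ 2)

/-- Euclidean norm of a real vector. -/
noncomputable def eNorm {n : Type*} [Fintype n] (v : n → ℝ) : ℝ :=
  Real.sqrt (∑ i, v i ^ 2)

/-- Spectral (ℓ²-operator) norm of a real matrix. -/
noncomputable def specNorm {m n : Type*} [Fintype m] [Fintype n] [DecidableEq n]
    (A : Matrix m n ℝ) : ℝ :=
  ‖LinearMap.toContinuousLinearMap (Matrix.toEuclideanLin A)‖

lemma spec_le_frob {m n : Type*} [Fintype m] [Fintype n] [DecidableEq n]
    (A : Matrix m n ℝ) : specNorm A ≤ frobNorm A := by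
  apply ContinuousLinearMap.opNorm_le_bound _ (Real.sqrt_nonneg _)
  intro v
  simp only [LinearMap.coe_toContinuousLinearMap', Matrix.toEuclideanLin_apply]
  rw [EuclideanSpace.norm_eq, EuclideanSpace.norm_eq]
  simp only [PiLp.toLp_apply, Real.norm_eq_abs, sq_abs]
  rw [← Real.sqrt_mul (by positivity)]
  apply Real.sqrt_le_sqrt
  rw [Finset.sum_mul]
  apply Finset.sum_le_sum
  intro i _
  calc (A *ᵥ (WithLp.equiv 2 (n → ℝ)) v) i ^ 2
      = (∑ j, A i j * (WithLp.equiv 2 (n → ℝ)) v j) ^ 2 := rfl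
    _ ≤ (∑ j, A i j ^ 2) * ∑ j, (WithLp.equiv 2 (n → ℝ)) v j ^ 2 :=
        Finset.sum_mul_sq_le_sq_mul_sq _ _ _
    _ = (∑ j, A i j ^ 2) * ∑ j, v j ^ 2 := rfl

/-- For the two-layer network with `β`-smooth activation, the stacked
Jacobians `𝐉_W ∈ ℝ^{n×Md}` (row `i` being `vec(J_{W,x_i})ᵀ`) satisfy
`‖𝐉_{W₁} − 𝐉_{W₂}‖₂ ≤ ‖𝐉_{W₁} − 𝐉_{W₂}‖_F ≤ β C_x² √(n/M) ‖W₁ − W₂‖_F`. -/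
theorem stacked_jacobian_lipschitz {M d n : ℕ} (σ σ' : ℝ → ℝ)
    (hderiv : ∀ t : ℝ, HasDerivAt σ (σ' t) t)
    (β : ℝ) (hsmooth : ∀ s t : ℝ, |σ' s - σ' t| ≤ β * |s - t|)
    (a : Fin M → ℝ) (ha : ∀ r, a r = 1 ∨ a r = -1)
    (x : Fin n → Fin d → ℝ) (Cx : ℝ) (hx : ∀ i, eNorm (x i) ≤ Cx)
    (W₁ W₂ : Matrix (Fin M) (Fin d) ℝ)
    (Jmat₁ Jmat₂ : Matrix (Fin n) (Fin M × Fin d) ℝ)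
    (hJmat₁ : Jmat₁ = Matrix.of fun i rj =>
      (Real.sqrt M)⁻¹ * (σ' (W₁ rj.1 ⬝ᵥ x i) * a rj.1) * x i rj.2)
    (hJmat₂ : Jmat₂ = Matrix.of fun i rj =>
      (Real.sqrt M)⁻¹ * (σ' (W₂ rj.1 ⬝ᵥ x i) * a rj.1) * x i rj.2) :
    specNorm (Jmat₁ - Jmat₂) ≤ frobNorm (Jmat₁ - Jmat₂) ∧
    frobNorm (Jmat₁ - Jmat₂) ≤ β * Cx ^ 2 * Real.sqrt (n / M) * frobNorm (W₁ - W₂) := by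
  refine ⟨spec_le_frob _, ?_⟩
  have hβ : 0 ≤ β := by
    have h := hsmooth 1 0
    simp only [sub_zero, abs_one, mul_one] at h
    exact le_trans (abs_nonneg _) h
  set D : Fin n → Fin M → ℝ := fun i r => σ' (W₁ r ⬝ᵥ x i) - σ' (W₂ r ⬝ᵥ x i) with hD
  have hMinv : ((Real.sqrt M)⁻¹) ^ 2 = (M : ℝ)⁻¹ := by
    rw [← Real.sqrt_inv, Real.sq_sqrt (by positivity)]
  have ha2 : ∀ r, a r ^ 2 = 1 := fun r => by rcases ha r with h | h <;> rw [h] <;> ring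
  have entry : ∀ i r j, (Jmat₁ - Jmat₂) i (r, j) ^ 2
      = (M : ℝ)⁻¹ * (D i r) ^ 2 * x i j ^ 2 := by
    intro i r j
    rw [hJmat₁, hJmat₂]
    simp only [Matrix.sub_apply, Matrix.of_apply]
    have e : (Real.sqrt M)⁻¹ * (σ' (W₁ r ⬝ᵥ x i) * a r) * x i j
        - (Real.sqrt M)⁻¹ * (σ' (W₂ r ⬝ᵥ x i) * a r) * x i j
        = (Real.sqrt M)⁻¹ * a r * (D i r * x i j) := by rw [hD]; ring
    rw [e, mul_pow, mul_pow, hMinv, ha2]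
    ring
  have key : ∀ i r, (D i r) ^ 2 * (∑ j, x i j ^ 2)
      ≤ β ^ 2 * Cx ^ 4 * ∑ j, (W₁ - W₂) r j ^ 2 := by
    intro i r
    set Xi := ∑ j, x i j ^ 2 with hXidef
    set SW := ∑ j, (W₁ - W₂) r j ^ 2 with hSWdef
    set t := W₁ r ⬝ᵥ x i - W₂ r ⬝ᵥ x i with ht
    have hXi0 : (0 : ℝ) ≤ Xi := by rw [hXidef]; positivity
    have hW0 : (0 : ℝ) ≤ SW := by rw [hSWdef]; positivity
    have hXi : Xi ≤ Cx ^ 2 := by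
      have h : Real.sqrt Xi ≤ Cx := hx i
      nlinarith [Real.sq_sqrt hXi0, Real.sqrt_nonneg Xi]
    have hCS : t ^ 2 ≤ SW * Xi := by
      have e : t = ∑ j, (W₁ - W₂) r j * x i j := by
        simp [ht, dotProduct, Matrix.sub_apply, sub_mul, Finset.sum_sub_distrib]
      rw [e, hSWdef, hXidef]
      exact Finset.sum_mul_sq_le_sq_mul_sq _ _ _
    have hD2 : (D i r) ^ 2 ≤ β ^ 2 * t ^ 2 := by
      have h1 : |D i r| ≤ β * |t| := hsmooth _ _
      nlinarith [abs_nonneg (D i r), abs_nonneg t, sq_abs (D i r), sq_abs t]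
    have hXi2 : Xi * Xi ≤ Cx ^ 4 := by nlinarith
    calc (D i r) ^ 2 * Xi ≤ β ^ 2 * t ^ 2 * Xi := mul_le_mul_of_nonneg_right hD2 hXi0
      _ ≤ β ^ 2 * (SW * Xi) * Xi :=
          mul_le_mul_of_nonneg_right (mul_le_mul_of_nonneg_left hCS (sq_nonneg β)) hXi0
      _ = β ^ 2 * SW * (Xi * Xi) := by ring
      _ ≤ β ^ 2 * SW * Cx ^ 4 :=
          mul_le_mul_of_nonneg_left hXi2 (mul_nonneg (sq_nonneg β) hW0)
      _ = β ^ 2 * Cx ^ 4 * SW := by ring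
  have hR0 : 0 ≤ β * Cx ^ 2 * Real.sqrt (n / M) * frobNorm (W₁ - W₂) := by
    have : 0 ≤ frobNorm (W₁ - W₂) := Real.sqrt_nonneg _
    positivity
  rw [frobNorm, ← Real.sqrt_sq hR0]
  apply Real.sqrt_le_sqrt
  have hfrob2 : frobNorm (W₁ - W₂) ^ 2 = ∑ r, ∑ j, (W₁ - W₂) r j ^ 2 :=
    Real.sq_sqrt (by positivity)
  have hsq2 : Real.sqrt ((n : ℝ) / M) ^ 2 = (n : ℝ) / M :=
    Real.sq_sqrt (by positivity)
  have expand : (β * Cx ^ 2 * Real.sqrt (n / M) * frobNorm (W₁ - W₂)) ^ 2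
      = β ^ 2 * Cx ^ 4 * ((n : ℝ) / M) * ∑ r, ∑ j, (W₁ - W₂) r j ^ 2 := by
    rw [show (β * Cx ^ 2 * Real.sqrt (n / M) * frobNorm (W₁ - W₂)) ^ 2
      = β ^ 2 * (Cx ^ 2) ^ 2 * Real.sqrt ((n : ℝ) / M) ^ 2 * frobNorm (W₁ - W₂) ^ 2 by ring,
      hsq2, hfrob2]
    ring
  rw [expand]
  calc ∑ i, ∑ rj : Fin M × Fin d, (Jmat₁ - Jmat₂) i rj ^ 2
      = ∑ i, ∑ r, (M : ℝ)⁻¹ * ((D i r) ^ 2 * ∑ j, x i j ^ 2) := by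
        refine Finset.sum_congr rfl fun i _ => ?_
        rw [Fintype.sum_prod_type]
        refine Finset.sum_congr rfl fun r _ => ?_
        rw [Finset.mul_sum, Finset.mul_sum]
        refine Finset.sum_congr rfl fun j _ => ?_
        rw [entry i r j]; ring
    _ ≤ ∑ i, ∑ r, (M : ℝ)⁻¹ * (β ^ 2 * Cx ^ 4 * ∑ j, (W₁ - W₂) r j ^ 2) := by
        refine Finset.sum_le_sum fun i _ => Finset.sum_le_sum fun r _ => ?_
        exact mul_le_mul_of_nonneg_left (key i r) (by positivity)
    _ = β ^ 2 * Cx ^ 4 * ((n : ℝ) / M) * ∑ r, ∑ j, (W₁ - W₂) r j ^ 2 := by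
        rw [Finset.sum_const, Finset.card_univ, Fintype.card_fin, ← Finset.mul_sum,
          nsmul_eq_mul, Finset.mul_sum]
        rw [div_eq_mul_inv]
        simp only [← Finset.mul_sum]
        ring
end

section
/- Let D ∈ ℝ^{n×n} be symmetric positive semidefinite, L ∈ ℝ^{n×n}, and suppose G = D − L − L^T is symmetric with λ_min(G) ≥ m > 0. Then for every v ∈ ℝⁿ, ‖(D − L) v‖₂ ≥ (m/2) ‖v‖₂; consequently D − L is invertible and ‖(D − L)^{-1}‖₂ ≤ 2/m. -/
open Matrix

lemma eNorm_eq {n : ℕ} (v : Fin n → ℝ) :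
    eNorm v = ‖(WithLp.equiv 2 (Fin n → ℝ)).symm v‖ := by
  rw [EuclideanSpace.norm_eq, eNorm]
  congr 1; apply Finset.sum_congr rfl; intro i _
  simp [sq_abs]

lemma eNorm_nonneg {n : ℕ} (v : Fin n → ℝ) : 0 ≤ eNorm v := Real.sqrt_nonneg _

lemma key {n : ℕ}
    (D L G : Matrix (Fin n) (Fin n) ℝ) (m : ℝ) (hm : 0 < m)
    (hD : D.PosSemidef) (hG : G = D - L - Lᵀ)
    (hmin : ∀ v : Fin n → ℝ, m * ∑ i, v i ^ 2 ≤ v ⬝ᵥ G.mulVec v)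
    (v : Fin n → ℝ) : (m / 2) * eNorm v ≤ eNorm ((D - L).mulVec v) := by
  have hLt : v ⬝ᵥ Lᵀ.mulVec v = v ⬝ᵥ L.mulVec v := by
    rw [dotProduct_mulVec, vecMul_transpose, dotProduct_comm]
  have hsq : eNorm v ^ 2 = ∑ i, v i ^ 2 := by
    rw [eNorm, Real.sq_sqrt]
    positivity
  have hdv : (m / 2) * eNorm v ^ 2 ≤ v ⬝ᵥ (D - L).mulVec v := by
    have h1 := hmin v
    have h2 : 0 ≤ v ⬝ᵥ D.mulVec v := by simpa using hD.dotProduct_mulVec_nonneg v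
    have hGv : v ⬝ᵥ G.mulVec v = v ⬝ᵥ D.mulVec v - 2 * (v ⬝ᵥ L.mulVec v) := by
      subst hG
      simp only [sub_mulVec, dotProduct_sub, hLt]; ring
    have : v ⬝ᵥ (D - L).mulVec v = v ⬝ᵥ D.mulVec v - v ⬝ᵥ L.mulVec v := by
      simp [sub_mulVec, dotProduct_sub]
    rw [this, hsq]
    nlinarith
  -- Cauchy-Schwarz
  have hCS : v ⬝ᵥ (D - L).mulVec v ≤ eNorm ((D - L).mulVec v) * eNorm v := by
    have := abs_real_inner_le_norm
      ((WithLp.equiv 2 (Fin n → ℝ)).symm ((D - L).mulVec v))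
      ((WithLp.equiv 2 (Fin n → ℝ)).symm v)
    rw [eNorm_eq, eNorm_eq]
    calc v ⬝ᵥ (D - L).mulVec v = ((D - L).mulVec v) ⬝ᵥ v := dotProduct_comm _ _
    _ ≤ |inner ℝ ((WithLp.equiv 2 (Fin n → ℝ)).symm ((D - L).mulVec v))
          ((WithLp.equiv 2 (Fin n → ℝ)).symm v)| := by
        rw [EuclideanSpace.inner_eq_star_dotProduct]
        simp [dotProduct, mul_comm]
        exact le_abs_self _
    _ ≤ _ := this
  rcases eq_or_lt_of_le (eNorm_nonneg v) with h0 | h0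
  · rw [← h0, mul_zero]; exact eNorm_nonneg _
  · nlinarith [hdv, hCS, h0]

lemma eNorm_eq_zero {n : ℕ} {v : Fin n → ℝ} (h : eNorm v = 0) : v = 0 := by
  have hs : ∑ i, v i ^ 2 = 0 := by
    have := Real.sqrt_eq_zero (by positivity : (0:ℝ) ≤ ∑ i, v i ^ 2) |>.mp h
    exact this
  funext i
  have := (Finset.sum_eq_zero_iff_of_nonneg (fun i _ => sq_nonneg (v i))).mp hs i (Finset.mem_univ i)
  exact pow_eq_zero_iff (by norm_num) |>.mp this

/-- If `D` is symmetric positive semidefinite and `G = D − L − Lᵀ` is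
symmetric with least eigenvalue at least `m > 0`, then `‖(D − L)v‖₂ ≥ (m/2)‖v‖₂` for all `v`;
consequently `D − L` is invertible and `‖(D − L)⁻¹‖₂ ≤ 2/m`. -/
theorem gauss_seidel_factor_lower_bound {n : ℕ}
    (D L G : Matrix (Fin n) (Fin n) ℝ) (m : ℝ) (hm : 0 < m)
    (hD : D.PosSemidef) (hG : G = D - L - Lᵀ) (hGsymm : G.IsSymm)
    (hmin : ∀ v : Fin n → ℝ, m * ∑ i, v i ^ 2 ≤ v ⬝ᵥ G.mulVec v) :
    (∀ v : Fin n → ℝ, (m / 2) * eNorm v ≤ eNorm ((D - L).mulVec v)) ∧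
    IsUnit (D - L) ∧ specNorm (D - L)⁻¹ ≤ 2 / m := by
  have hkey := key D L G m hm hD hG hmin
  have hu : IsUnit (D - L) := by
    rw [← Matrix.mulVec_injective_iff_isUnit]
    intro a b hab
    have h0 : (D - L).mulVec (a - b) = 0 := by
      rw [mulVec_sub, hab, sub_self]
    have := hkey (a - b)
    rw [h0] at this
    have h1 : eNorm (0 : Fin n → ℝ) = 0 := by simp [eNorm]
    rw [h1] at this
    have : eNorm (a - b) = 0 := le_antisymm (by nlinarith [eNorm_nonneg (a-b)]) (eNorm_nonneg _)
    have := eNorm_eq_zero this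
    exact sub_eq_zero.mp this
  refine ⟨hkey, hu, ?_⟩
  apply ContinuousLinearMap.opNorm_le_bound _ (by positivity)
  intro x
  set w : Fin n → ℝ := WithLp.equiv 2 (Fin n → ℝ) x with hw
  have hx : ‖x‖ = eNorm w := by
    rw [eNorm_eq]; rfl
  have hlhs : ‖LinearMap.toContinuousLinearMap (Matrix.toEuclideanLin (D - L)⁻¹) x‖
      = eNorm ((D - L)⁻¹.mulVec w) := by
    rw [eNorm_eq]; rfl
  rw [hlhs, hx]
  set v : Fin n → ℝ := (D - L)⁻¹.mulVec w with hv
  have hAv : (D - L).mulVec v = w := by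
    rw [hv, mulVec_mulVec, Matrix.mul_nonsing_inv _ ((Matrix.isUnit_iff_isUnit_det _).mp hu),
      one_mulVec]
  have := hkey v
  rw [hAv] at this
  rw [div_mul_eq_mul_div, le_div_iff₀ hm]
  nlinarith
end
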